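/- Let X be a weakly Lindelöf determined real Banach space, i.e., assume there exists a set M ⊆ X whose closed linear span is X and such that for every x* ∈ X* the set {x ∈ M : x*(x) ≠ 0} is countable. Then X contains a complemented copy of c₀ if and only if X contains an isomorphic copy of c₀. -/

import Mathlib

open scoped ZeroAtInfty

/-- `X` contains an isomorphic copy of `Z`: a continuous linear injection from `Z` into `X`
which is bounded below (an isomorphism onto its image). -/
def ContainsIsomorphicCopy (Z X : Type*) [NormedAddCommGroup Z] [NormedSpace ℝ Z]
    [NormedAddCommGroup X] [NormedSpace ℝ X] : Prop :=
  ∃ f : Z →L[ℝ] X, ∃ c : ℝ, 0 < c ∧ ∀ z : Z, c * ‖z‖ ≤ ‖f z‖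

/-- `X` contains a complemented copy of `Z`: a closed subspace `F` of `X` isomorphic to `Z`
together with a bounded linear projection of `X` onto `F`. -/
def ContainsComplementedCopy (Z X : Type*) [NormedAddCommGroup Z] [NormedSpace ℝ Z]
    [NormedAddCommGroup X] [NormedSpace ℝ X] : Prop :=
  ∃ F : Submodule ℝ X, IsClosed (F : Set X) ∧ Nonempty (F ≃L[ℝ] Z) ∧
    ∃ P : X →L[ℝ] X, LinearMap.range (P : X →ₗ[ℝ] X) = F ∧ ∀ x ∈ F, P x = x

open Filter Topology

-- Aux 1: dense + bounded pointwise convergence extension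
lemma aux_dense_tendsto {X : Type*} [NormedAddCommGroup X] [NormedSpace ℝ X]
    (F : ℕ → X →L[ℝ] ℝ) (B : ℝ) (hB : ∀ n, ‖F n‖ ≤ B)
    (V : Submodule ℝ X) (hd : Dense (V : Set X))
    (hconv : ∀ v ∈ V, Tendsto (fun n => F n v) atTop (𝓝 0)) (x : X) :
    Tendsto (fun n => F n x) atTop (𝓝 0) := by
  have hB0 : 0 ≤ B := le_trans (norm_nonneg _) (hB 0)
  rw [NormedAddCommGroup.tendsto_nhds_zero]
  intro ε hε
  have hr : 0 < ε / (2 * (B + 1)) := by positivity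
  obtain ⟨v, hvV, hv⟩ : ∃ v ∈ (V : Set X), dist x v < ε / (2 * (B + 1)) := by
    have hx : x ∈ closure (V : Set X) := hd x
    exact Metric.mem_closure_iff.mp hx _ hr
  have hev : ∀ᶠ n in atTop, ‖F n v‖ < ε / 2 := by
    have := hconv v hvV
    rw [NormedAddCommGroup.tendsto_nhds_zero] at this
    exact this (ε / 2) (by positivity)
  filter_upwards [hev] with n hn
  have h1 : ‖F n x - F n v‖ ≤ B * ‖x - v‖ := by
    calc ‖F n x - F n v‖ = ‖F n (x - v)‖ := by rw [map_sub]
    _ ≤ ‖F n‖ * ‖x - v‖ := (F n).le_opNorm _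
    _ ≤ B * ‖x - v‖ := by gcongr; exact hB n
  have hxv : ‖x - v‖ < ε / (2 * (B + 1)) := by rwa [← dist_eq_norm]
  have : ‖F n x‖ ≤ ‖F n x - F n v‖ + ‖F n v‖ := by
    have := norm_add_le (F n x - F n v) (F n v)
    simpa using this
  calc ‖F n x‖ ≤ ‖F n x - F n v‖ + ‖F n v‖ := this
  _ < B * (ε / (2 * (B + 1))) + ε / 2 := by
      refine add_lt_add_of_le_of_lt (le_trans h1 ?_) hn
      gcongr
  _ ≤ ε / 2 + ε / 2 := by
      have : B * (ε / (2 * (B + 1))) ≤ ε / 2 := by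
        rw [mul_div_assoc'] at *
        rw [div_le_div_iff₀ (by positivity) (by norm_num)]
        nlinarith
      linarith
  _ = ε := by ring

lemma aux_diag_select {α : Type*} (K : Set α) (g₀ : α) (hg₀ : g₀ ∈ K)
    (v : ℕ → ℕ → α → ℝ)
    (Hev : ∀ m : ℕ, ∀ᶠ n in atTop, ∃ g ∈ K, ∀ k ≤ m, |v n k g| ≤ 1 / (m + 1)) :
    ∃ g : ℕ → α, (∀ n, g n ∈ K) ∧ ∀ k, Tendsto (fun n => v n k (g n)) atTop (𝓝 0) := by
  classical
  choose N hN using fun m => (eventually_atTop.mp (Hev m))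
  -- monotone bound
  let N' : ℕ → ℕ := fun m => (Finset.range (m + 1)).sup N
  have hN'le : ∀ m, N m ≤ N' m := fun m =>
    Finset.le_sup (Finset.mem_range.mpr (Nat.lt_succ_self m))
  have hN'mono : Monotone N' := fun a b hab =>
    Finset.sup_mono (Finset.range_subset_range.mpr (by omega))
  let mf : ℕ → ℕ := fun n => Nat.findGreatest (fun m => N' m ≤ n) n
  have hPm : ∀ n, N' 0 ≤ n → N' (mf n) ≤ n := fun n hn =>
    Nat.findGreatest_spec (P := fun m => N' m ≤ n) (Nat.zero_le n) hn
  have hmf_ge : ∀ m n, m ≤ n → N' m ≤ n → m ≤ mf n := fun m n h1 h2 =>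
    Nat.le_findGreatest (P := fun m => N' m ≤ n) h1 h2
  have hEx : ∀ n, N' 0 ≤ n → ∃ g ∈ K, ∀ k ≤ mf n, |v n k g| ≤ 1 / (mf n + 1) := by
    intro n hn
    exact hN (mf n) n (le_trans (hN'le _) (hPm n hn))
  let g : ℕ → α := fun n =>
    if h : ∃ g ∈ K, ∀ k ≤ mf n, |v n k g| ≤ 1 / (mf n + 1) then h.choose else g₀
  refine ⟨g, fun n => ?_, fun k => ?_⟩
  · by_cases h : ∃ g ∈ K, ∀ k ≤ mf n, |v n k g| ≤ 1 / (mf n + 1)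
    · simpa only [g, dif_pos h] using h.choose_spec.1
    · simpa only [g, dif_neg h] using hg₀
  · rw [Metric.tendsto_atTop]
    intro ε hε
    obtain ⟨m₀, hm₀k, hm₀ε⟩ : ∃ m₀ : ℕ, k ≤ m₀ ∧ 1 / ((m₀ : ℝ) + 1) < ε := by
      obtain ⟨m₁, hm₁⟩ := exists_nat_gt (1 / ε)
      refine ⟨max k m₁, le_max_left _ _, ?_⟩
      rw [div_lt_iff₀ (by positivity)]
      have h1 : 1 / ε < (max k m₁ : ℕ) := lt_of_lt_of_le hm₁ (by exact_mod_cast Nat.cast_le.mpr (le_max_right k m₁))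
      have : 1 / ε < (max k m₁ : ℕ) + 1 := by linarith
      calc (1:ℝ) = ε * (1/ε) := by field_simp
      _ < ε * (((max k m₁ : ℕ) : ℝ) + 1) := by
          exact mul_lt_mul_of_pos_left this hε
    refine ⟨max (max (N' m₀) m₀) (N' 0), fun n hn => ?_⟩
    have hn0 : N' 0 ≤ n := le_trans (le_max_right _ _) hn
    have hnm₀ : m₀ ≤ mf n :=
      hmf_ge m₀ n (le_trans (le_trans (le_max_right _ _) (le_max_left _ _)) hn)
        (le_trans (le_trans (le_max_left _ _) (le_max_left _ _)) hn)
    have h := hEx n hn0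
    have hval : |v n k (g n)| ≤ 1 / (mf n + 1) := by
      simp only [g, dif_pos h]
      exact h.choose_spec.2 k (le_trans hm₀k hnm₀)
    rw [Real.dist_eq, sub_zero]
    calc |v n k (g n)| ≤ 1 / ((mf n : ℝ) + 1) := hval
    _ ≤ 1 / ((m₀ : ℝ) + 1) := by
        apply one_div_le_one_div_of_le (by positivity)
        have : (m₀:ℝ) ≤ mf n := Nat.cast_le.mpr hnm₀
        linarith
    _ < ε := hm₀ε

lemma aux_cluster {X : Type*} [NormedAddCommGroup X] [NormedSpace ℝ X]
    (f : C₀(ℕ, ℝ) →L[ℝ] X) (C : ℝ) (hC : 0 ≤ C)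
    (h : ℕ → X →L[ℝ] ℝ) (hnorm : ∀ n, ‖h n‖ ≤ C)
    (hproj : ∀ n z, h n (f z) = z n)
    (S : Set X) (hS : ∀ w ∈ S, ∀ n, h n w = 0)
    (x : ℕ → X)
    (m : ℕ) (ε : ℝ) (hε : 0 < ε) :
    ∀ᶠ n in atTop, ∃ g : X →L[ℝ] ℝ,
      (‖g‖ ≤ C ∧ (∀ z, g (f z) = 0) ∧ ∀ w ∈ S, g w = 0) ∧
      ∀ k ≤ m, |h n (x k) - g (x k)| ≤ ε := by
  by_contra hcon
  rw [Filter.not_eventually] at hcon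
  obtain ⟨φ, hφmono, hφ⟩ := Filter.extraction_of_frequently_atTop hcon
  -- sequential compactness in the product
  set s : Set (ℕ → ℝ) := Set.pi Set.univ (fun k => Set.Icc (-(C * ‖x k‖)) (C * ‖x k‖)) with hs
  have hcomp : IsCompact s := isCompact_univ_pi fun k => isCompact_Icc
  have habs : ∀ n k, |h n (x k)| ≤ C * ‖x k‖ := by
    intro n k
    calc |h n (x k)| ≤ ‖h n‖ * ‖x k‖ := (h n).le_opNorm _
    _ ≤ C * ‖x k‖ := by gcongr; exact hnorm n
  have hmem : ∀ j, (fun k => h (φ j) (x k)) ∈ s := by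
    intro j k _
    exact Set.mem_Icc.mpr (abs_le.mp (habs _ k))
  obtain ⟨a, -, ψ, hψmono, hψtend⟩ := hcomp.isSeqCompact hmem
  set ms : ℕ → ℕ := fun j => φ (ψ j) with hms
  have hmsmono : StrictMono ms := hφmono.comp hψmono
  have hmstop : Tendsto ms atTop atTop := hmsmono.tendsto_atTop
  have hpt : ∀ k, Tendsto (fun j => h (ms j) (x k)) atTop (𝓝 (a k)) := by
    intro k
    exact tendsto_pi_nhds.mp hψtend k
  -- submodule of convergence
  set V : Submodule ℝ X :=
    { carrier := {w | ∃ l : ℝ, Tendsto (fun j => h (ms j) w) atTop (𝓝 l)}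
      add_mem' := by
        rintro p q ⟨lp, hp⟩ ⟨lq, hq⟩
        exact ⟨lp + lq, by simpa [map_add] using hp.add hq⟩
      zero_mem' := ⟨0, by simpa using tendsto_const_nhds⟩
      smul_mem' := by
        rintro r p ⟨l, hp⟩
        exact ⟨r * l, by simpa [map_smul] using hp.const_mul r⟩ } with hV
  have hlim : ∀ v : V, Tendsto (fun j => h (ms j) (v : X)) atTop
      (𝓝 (limUnder atTop fun j => h (ms j) (v : X))) := by
    rintro ⟨w, l, hl⟩
    simpa [hl.limUnder_eq] using hl
  set Ψlin : V →ₗ[ℝ] ℝ :=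
    { toFun := fun v => limUnder atTop fun j => h (ms j) (v : X)
      map_add' := by
        intro p q
        refine Filter.Tendsto.limUnder_eq ?_
        have := (hlim p).add (hlim q)
        simpa [map_add] using this
      map_smul' := by
        intro r p
        refine Filter.Tendsto.limUnder_eq ?_
        have := (hlim p).const_mul r
        simpa [map_smul] using this } with hΨlin
  have hΨbound : ∀ v : V, ‖Ψlin v‖ ≤ C * ‖v‖ := by
    intro v
    have h1 : Tendsto (fun j => |h (ms j) (v : X)|) atTop (𝓝 |Ψlin v|) := (hlim v).abs
    refine le_of_tendsto h1 (Eventually.of_forall fun j => ?_)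
    have hcoe : ‖(v : X)‖ = ‖v‖ := rfl
    calc |h (ms j) (v : X)| ≤ ‖h (ms j)‖ * ‖(v : X)‖ := (h (ms j)).le_opNorm _
    _ ≤ C * ‖(v : X)‖ := by gcongr; exact hnorm _
    _ = C * ‖v‖ := by rw [hcoe]
  set Ψ : V →L[ℝ] ℝ := Ψlin.mkContinuous C hΨbound with hΨ
  obtain ⟨g, hg_ext, hg_norm⟩ := exists_extension_norm_eq V Ψ
  have key : ∀ (w : X) (l : ℝ), Tendsto (fun j => h (ms j) w) atTop (𝓝 l) → g w = l := by
    intro w l hw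
    have hwV : w ∈ V := ⟨l, hw⟩
    have := hg_ext ⟨w, hwV⟩
    rw [this]
    show Ψlin ⟨w, hwV⟩ = l
    exact hw.limUnder_eq
  have hgnorm : ‖g‖ ≤ C := by
    rw [hg_norm]
    exact LinearMap.mkContinuous_norm_le _ hC _
  have hgf : ∀ z : C₀(ℕ, ℝ), g (f z) = 0 := by
    intro z
    refine key (f z) 0 ?_
    have hz : Tendsto (fun n => z n) atTop (𝓝 0) := by
      have := z.zero_at_infty'
      rwa [cocompact_eq_atTop] at this
    have : Tendsto (fun j => z (ms j)) atTop (𝓝 0) := hz.comp hmstop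
    simpa [hproj] using this
  have hgS : ∀ w ∈ S, g w = 0 := by
    intro w hw
    refine key w 0 ?_
    simpa [hS w hw] using (tendsto_const_nhds : Tendsto (fun _ : ℕ => (0:ℝ)) atTop (𝓝 0))
  have hga : ∀ k, g (x k) = a k := fun k => key _ _ (hpt k)
  -- contradiction
  have hev : ∀ᶠ j in atTop, ∀ k ≤ m, |h (ms j) (x k) - g (x k)| ≤ ε := by
    have : ∀ k, k ≤ m → ∀ᶠ j in atTop, |h (ms j) (x k) - g (x k)| ≤ ε := by
      intro k _
      have h2 : Tendsto (fun j => h (ms j) (x k) - g (x k)) atTop (𝓝 0) := by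
        have := (hpt k).sub_const (g (x k))
        simpa [hga k] using this
      have h3 : Tendsto (fun j => |h (ms j) (x k) - g (x k)|) atTop (𝓝 0) := by
        simpa using h2.abs
      exact (h3.eventually_le_const hε)
    have h4 := (Set.finite_Iic m).eventually_all.mpr
      (fun k hk => this k (Set.mem_Iic.mp hk))
    exact h4.mono fun j hj k hk => hj k (Set.mem_Iic.mpr hk)
  obtain ⟨j, hj⟩ := hev.exists
  exact hφ (ψ j) ⟨g, ⟨hgnorm, hgf, hgS⟩, hj⟩

section HB
variable {X : Type*} [NormedAddCommGroup X] [NormedSpace ℝ X]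

-- construction of biorthogonal extended functionals
lemma aux_biorth (f : C₀(ℕ, ℝ) →L[ℝ] X) (c : ℝ) (hc : 0 < c)
    (hf : ∀ z : C₀(ℕ, ℝ), c * ‖z‖ ≤ ‖f z‖) :
    ∃ h : ℕ → X →L[ℝ] ℝ, (∀ n, ‖h n‖ ≤ c⁻¹) ∧ ∀ n z, h n (f z) = z n := by
  have hinj : Function.Injective f := by
    intro z w hzw
    have h0 : f (z - w) = 0 := by rw [map_sub, sub_eq_zero]; exact hzw
    have h1 := hf (z - w)
    rw [h0, norm_zero] at h1
    have h2 : ‖z - w‖ ≤ 0 := by nlinarith [norm_nonneg (z - w)]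
    rwa [← sub_eq_zero, ← norm_le_zero_iff]
  let fl : C₀(ℕ, ℝ) →ₗ[ℝ] X := ↑f
  have hinj' : Function.Injective fl := hinj
  let eqv := LinearEquiv.ofInjective fl hinj'
  have heqv : ∀ y : LinearMap.range fl, f (eqv.symm y) = (y : X) := by
    intro y
    have := eqv.apply_symm_apply y
    have h2 : ((eqv (eqv.symm y)) : X) = (y : X) := by rw [this]
    rwa [LinearEquiv.ofInjective_apply] at h2
  let ev : ℕ → (C₀(ℕ, ℝ) →ₗ[ℝ] ℝ) := fun n =>
    { toFun := fun z => z n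
      map_add' := fun z w => by simp
      map_smul' := fun r z => by simp }
  have hzn : ∀ (z : C₀(ℕ, ℝ)) (n : ℕ), |z n| ≤ ‖z‖ := by
    intro z n
    rw [← ZeroAtInftyContinuousMap.norm_toBCF_eq_norm]
    exact z.toBCF.norm_coe_le_norm n
  have hbnd : ∀ n (y : LinearMap.range fl),
      ‖((ev n).comp (eqv.symm : _ →ₗ[ℝ] C₀(ℕ, ℝ)) : _ →ₗ[ℝ] ℝ) y‖ ≤ c⁻¹ * ‖y‖ := by
    intro n y
    have h3 : ‖eqv.symm y‖ ≤ c⁻¹ * ‖(y : X)‖ := by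
      have := hf (eqv.symm y)
      rw [heqv y] at this
      rw [← mul_le_mul_iff_right₀ hc, ← mul_assoc, mul_inv_cancel₀ (ne_of_gt hc), one_mul]
      exact this
    calc ‖((ev n).comp (eqv.symm : _ →ₗ[ℝ] C₀(ℕ, ℝ)) : _ →ₗ[ℝ] ℝ) y‖
        = |(eqv.symm y) n| := rfl
    _ ≤ ‖eqv.symm y‖ := hzn _ n
    _ ≤ c⁻¹ * ‖(y : X)‖ := h3
    _ = c⁻¹ * ‖y‖ := rfl
  let φ : ℕ → (LinearMap.range fl →L[ℝ] ℝ) := fun n =>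
    LinearMap.mkContinuous _ c⁻¹ (hbnd n)
  have hHB := fun n => exists_extension_norm_eq
    (LinearMap.range fl) (φ n)
  choose h hh1 hh2 using hHB
  refine ⟨h, fun n => ?_, fun n z => ?_⟩
  · rw [hh2 n]
    exact LinearMap.mkContinuous_norm_le _ (by positivity) _
  · have hmem : f z ∈ LinearMap.range fl := ⟨z, rfl⟩
    let ymem : LinearMap.range fl := ⟨f z, hmem⟩
    have h5 := hh1 n ymem
    have hy : (ymem : X) = f z := rfl
    rw [← hy, h5]
    have hsymm : eqv.symm ymem = z := by
      have : eqv z = ymem := by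
        apply Subtype.ext
        rw [LinearEquiv.ofInjective_apply]
        rfl
      rw [← this, LinearEquiv.symm_apply_apply]
    show (eqv.symm ymem) n = z n
    rw [hsymm]
end HB

section RevMain
variable {X : Type*} [NormedAddCommGroup X] [NormedSpace ℝ X] [CompleteSpace X]

lemma aux_rev (M : Set X) (hM1 : Dense ((Submodule.span ℝ M : Submodule ℝ X) : Set X))
    (hM2 : ∀ f : X →L[ℝ] ℝ, {x ∈ M | f x ≠ 0}.Countable)
    (f : C₀(ℕ, ℝ) →L[ℝ] X) (c : ℝ) (hc : 0 < c)
    (hf : ∀ z : C₀(ℕ, ℝ), c * ‖z‖ ≤ ‖f z‖)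
    (h : ℕ → X →L[ℝ] ℝ) (hnorm : ∀ n, ‖h n‖ ≤ c⁻¹) (hproj : ∀ n z, h n (f z) = z n) :
    ∃ F : Submodule ℝ X, IsClosed (F : Set X) ∧ Nonempty (F ≃L[ℝ] C₀(ℕ, ℝ)) ∧
      ∃ P : X →L[ℝ] X, LinearMap.range (P : X →ₗ[ℝ] X) = F ∧ ∀ x ∈ F, P x = x := by
  classical
  set C : ℝ := c⁻¹ with hCdef
  have hC : 0 ≤ C := by positivity
  -- the countable set D
  set D : Set X := {w ∈ M | ∃ n, h n w ≠ 0} with hDdef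
  have hDcount : D.Countable := by
    have hsub : D ⊆ ⋃ n, {w ∈ M | h n w ≠ 0} := by
      rintro w ⟨hwM, n, hn⟩
      exact Set.mem_iUnion.mpr ⟨n, hwM, hn⟩
    exact (Set.countable_iUnion fun n => hM2 (h n)).mono hsub
  obtain ⟨x, hx⟩ := (hDcount.insert 0).exists_eq_range (Set.insert_nonempty _ _)
  have hS : ∀ w ∈ M \ D, ∀ n, h n w = 0 := by
    rintro w ⟨hwM, hwD⟩ n
    by_contra hne
    exact hwD ⟨hwM, n, hne⟩
  -- the set K
  set K : Set (X →L[ℝ] ℝ) :=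
    {g | ‖g‖ ≤ C ∧ (∀ z, g (f z) = 0) ∧ ∀ w ∈ M \ D, g w = 0} with hKdef
  have h0K : (0 : X →L[ℝ] ℝ) ∈ K := by
    refine ⟨by simpa using hC, fun z => rfl, fun w _ => rfl⟩
  have Hev : ∀ m : ℕ, ∀ᶠ n in atTop, ∃ g ∈ K,
      ∀ k ≤ m, |h n (x k) - g (x k)| ≤ 1 / (m + 1) := by
    intro m
    have := aux_cluster f C hC h hnorm hproj (M \ D) hS x m (1 / (m + 1)) (by positivity)
    exact this.mono fun n ⟨g, hg1, hg2⟩ => ⟨g, hg1, hg2⟩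
  obtain ⟨g, hgK, hgconv⟩ := aux_diag_select K 0 h0K
    (fun n k gg => h n (x k) - gg (x k)) Hev
  -- the functionals F n := h n - g n
  set Fs : ℕ → X →L[ℝ] ℝ := fun n => h n - g n with hFsdef
  have hFnorm : ∀ n, ‖Fs n‖ ≤ C + C := fun n =>
    le_trans (norm_sub_le _ _) (add_le_add (hnorm n) (hgK n).1)
  have hFapp : ∀ n w, Fs n w = h n w - g n w := fun n w => rfl
  -- pointwise convergence on a dense subspace
  set V' : Submodule ℝ X := Submodule.span ℝ (Set.range x ∪ (M \ D)) with hV'def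
  have hdense : Dense (V' : Set X) := by
    refine hM1.mono ?_
    have hsub : M ⊆ Set.range x ∪ (M \ D) := by
      intro w hw
      by_cases hwD : w ∈ D
      · left; rw [← hx]; exact Set.mem_insert_of_mem _ hwD
      · right; exact ⟨hw, hwD⟩
    exact Submodule.span_mono hsub
  have hconvV : ∀ v ∈ V', Tendsto (fun n => Fs n v) atTop (𝓝 0) := by
    intro v hv
    induction hv using Submodule.span_induction with
    | mem w hw =>
      rcases hw with ⟨k, rfl⟩ | hw
      · simpa [hFapp] using hgconv k
      · have : ∀ n, Fs n w = 0 := fun n => by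
          rw [hFapp, hS w hw n, (hgK n).2.2 w hw, sub_zero]
        simpa [this] using tendsto_const_nhds
    | zero => simpa using tendsto_const_nhds
    | add p q hp hq ihp ihq => simpa [map_add] using ihp.add ihq
    | smul r p hp ihp => simpa [map_smul] using ihp.const_mul r
  have hconv : ∀ w : X, Tendsto (fun n => Fs n w) atTop (𝓝 0) :=
    aux_dense_tendsto Fs (C + C) hFnorm V' hdense hconvV
  -- the map S : X →L[ℝ] C₀
  let Sfun : X → C₀(ℕ, ℝ) := fun w =>
    { toFun := fun n => Fs n w
      continuous_toFun := continuous_of_discreteTopology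
      zero_at_infty' := by rw [cocompact_eq_atTop]; exact hconv w }
  have hSfun_apply : ∀ w n, Sfun w n = Fs n w := fun w n => rfl
  let Slin : X →ₗ[ℝ] C₀(ℕ, ℝ) :=
    { toFun := Sfun
      map_add' := fun p q => by
        ext n
        simp [hSfun_apply, map_add]
      map_smul' := fun r p => by
        ext n
        simp [hSfun_apply, map_smul] }
  have hSbound : ∀ w, ‖Slin w‖ ≤ (C + C) * ‖w‖ := by
    intro w
    rw [← ZeroAtInftyContinuousMap.norm_toBCF_eq_norm]
    refine (BoundedContinuousFunction.norm_le (by positivity)).mpr fun n => ?_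
    calc ‖(Sfun w) n‖ = |Fs n w| := rfl
    _ ≤ ‖Fs n‖ * ‖w‖ := (Fs n).le_opNorm _
    _ ≤ (C + C) * ‖w‖ := by gcongr; exact hFnorm n
  let S : X →L[ℝ] C₀(ℕ, ℝ) := Slin.mkContinuous ((C + C)) hSbound
  have hS_apply : ∀ w n, S w n = Fs n w := fun w n => rfl
  -- the projection
  let P : X →L[ℝ] X := f.comp S
  have hSfz : ∀ z : C₀(ℕ, ℝ), S (f z) = z := by
    intro z
    ext n
    rw [hS_apply, hFapp, hproj, (hgK n).2.1 z, sub_zero]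
  have hPfz : ∀ z : C₀(ℕ, ℝ), P (f z) = f z := by
    intro z
    show f (S (f z)) = f z
    rw [hSfz]
  -- the range submodule
  let fl : C₀(ℕ, ℝ) →ₗ[ℝ] X := ↑f
  set E : Submodule ℝ X := LinearMap.range fl with hEdef
  have hmemE : ∀ z, f z ∈ E := fun z => ⟨z, rfl⟩
  have hinj : Function.Injective f := by
    intro z w hzw
    have h0 : f (z - w) = 0 := by rw [map_sub, sub_eq_zero]; exact hzw
    have h1 := hf (z - w)
    rw [h0, norm_zero] at h1
    have h2 : ‖z - w‖ ≤ 0 := by nlinarith [norm_nonneg (z - w)]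
    rwa [← sub_eq_zero, ← norm_le_zero_iff]
  have hanti : AntilipschitzWith (Real.toNNReal C) f := by
    apply f.antilipschitz_of_bound
    intro z
    rw [Real.coe_toNNReal C hC]
    have := hf z
    rw [hCdef, ← mul_le_mul_iff_right₀ hc, ← mul_assoc, mul_inv_cancel₀ (ne_of_gt hc), one_mul]
    exact this
  have hclosed : IsClosed (E : Set X) := by
    have h1 : IsClosed (Set.range f) := hanti.isClosed_range f.uniformContinuous
    have h2 : (E : Set X) = Set.range f := by
      ext w
      simp [hEdef, LinearMap.mem_range, Set.mem_range]
      rfl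
    rw [h2]
    exact h1
  haveI : CompleteSpace E := hclosed.completeSpace_coe
  -- the equivalence
  let f' : C₀(ℕ, ℝ) →L[ℝ] E := f.codRestrict E hmemE
  have hker : LinearMap.ker (f' : C₀(ℕ, ℝ) →ₗ[ℝ] E) = ⊥ := by
    ext z
    simp only [LinearMap.mem_ker, Submodule.mem_bot]
    constructor
    · intro hz
      apply hinj
      have h1 : (f' z : X) = ((0 : E) : X) := by exact congrArg Subtype.val hz
      have h2 : f z = 0 := h1
      rw [h2, map_zero]
    · rintro rfl
      simp
  have hrange : LinearMap.range (f' : C₀(ℕ, ℝ) →ₗ[ℝ] E) = ⊤ := by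
    rw [LinearMap.range_eq_top]
    rintro ⟨w, z, rfl⟩
    exact ⟨z, rfl⟩
  let e : C₀(ℕ, ℝ) ≃L[ℝ] E := ContinuousLinearEquiv.ofBijective f' hker hrange
  refine ⟨E, hclosed, ⟨e.symm⟩, P, ?_, ?_⟩
  · apply le_antisymm
    · rintro w ⟨v, rfl⟩
      exact hmemE (S v)
    · rintro w ⟨z, rfl⟩
      exact ⟨f z, hPfz z⟩
  · rintro w ⟨z, rfl⟩
    exact hPfz z
end RevMain

theorem copy_c0_iff_complemented_copy_c0_of_WLD
    (X : Type*) [NormedAddCommGroup X] [NormedSpace ℝ X] [CompleteSpace X]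
    (M : Set X) (hM1 : Dense ((Submodule.span ℝ M : Submodule ℝ X) : Set X))
    (hM2 : ∀ f : X →L[ℝ] ℝ, {x ∈ M | f x ≠ 0}.Countable) :
    ContainsComplementedCopy C₀(ℕ, ℝ) X ↔ ContainsIsomorphicCopy C₀(ℕ, ℝ) X := by
  constructor
  · rintro ⟨F, hFc, ⟨e⟩, -⟩
    refine ⟨F.subtypeL.comp (e.symm : C₀(ℕ, ℝ) →L[ℝ] F),
      (‖(e : F →L[ℝ] C₀(ℕ, ℝ))‖ + 1)⁻¹, by positivity, fun z => ?_⟩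
    have h1 : ‖z‖ ≤ (‖(e : F →L[ℝ] C₀(ℕ, ℝ))‖ + 1) * ‖e.symm z‖ := by
      calc ‖z‖ = ‖e (e.symm z)‖ := by rw [e.apply_symm_apply]
      _ = ‖(e : F →L[ℝ] C₀(ℕ, ℝ)) (e.symm z)‖ := by rw [ContinuousLinearEquiv.coe_coe]
      _ ≤ ‖(e : F →L[ℝ] C₀(ℕ, ℝ))‖ * ‖e.symm z‖ := (e : F →L[ℝ] C₀(ℕ, ℝ)).le_opNorm _
      _ ≤ _ := by
          have := norm_nonneg (e.symm z)
          nlinarith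
    have h2 : ‖(F.subtypeL.comp (e.symm : C₀(ℕ, ℝ) →L[ℝ] F)) z‖ = ‖e.symm z‖ := rfl
    rw [h2, inv_mul_le_iff₀ (by positivity)]
    exact h1
  · rintro ⟨f, c, hc, hf⟩
    obtain ⟨h, hnorm, hproj⟩ := aux_biorth f c hc hf
    exact aux_rev M hM1 hM2 f c hc hf h hnorm hproj
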